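/- For a binary string b = b_2 b_3 ... b_n (indexed from 2 to n), define the sequence f(b) of length n recursively: start with the one-element sequence (1), and for i = 2, ..., n in increasing order, insert the value i at the leftmost position of the current sequence if b_i = 1, and at the rightmost position if b_i = 0. Then for all binary strings b, b' (indexed from 2 to n), the permutations f(b) and f(b') differ by a jump if and only if the Hamming distance between b and b' equals 1. -/

import Mathlib

/-- The sequence obtained from the binary string `b` (whose relevant bits are
`b_2, ..., b_n`) by starting from the one-element sequence `[1]` and, for
`i = 2, ..., n` in increasing order, inserting the value `i` at the leftmost position
if `b_i = 1` and at the rightmost position if `b_i = 0`. -/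
def insertPerm (b : ℕ → Bool) : ℕ → List ℕ
  | 0 => []
  | 1 => [1]
  | n + 2 =>
    if b (n + 2) = true then (n + 2) :: insertPerm b (n + 1)
    else insertPerm b (n + 1) ++ [n + 2]

/-- `l'` is obtained from `l` by a right-jump: for some positions `i < j` (0-indexed), the
entry at position `i` is larger than every entry at positions `i+1, ..., j`, and the
segment `l_i l_{i+1} ... l_j` is replaced by `l_{i+1} ... l_j l_i`, all other positions
being unchanged. -/
def RightJump (l l' : List ℕ) : Prop :=
  l'.length = l.length ∧
  ∃ i j : ℕ, i < j ∧ j < l.length ∧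
    (∀ t : ℕ, i < t → t ≤ j → l.getD t 0 < l.getD i 0) ∧
    (∀ r : ℕ, i ≤ r → r < j → l'.getD r 0 = l.getD (r + 1) 0) ∧
    l'.getD j 0 = l.getD i 0 ∧
    (∀ r : ℕ, r < l.length → (r < i ∨ j < r) → l'.getD r 0 = l.getD r 0)

/-- Two sequences differ by a jump if one is obtained from the other by a single
right-jump (equivalently, the other is obtained by a left-jump). -/
def DiffByJump (l l' : List ℕ) : Prop := RightJump l l' ∨ RightJump l' l


lemma insertPerm_succ (b : ℕ → Bool) (n : ℕ) (h : 1 ≤ n) :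
    insertPerm b (n+1) = if b (n+1) = true then (n+1) :: insertPerm b n
      else insertPerm b n ++ [n+1] := by
  obtain ⟨m, rfl⟩ : ∃ m, n = m + 1 := ⟨n - 1, by omega⟩
  rfl

lemma length_insertPerm (b : ℕ → Bool) (n : ℕ) : (insertPerm b n).length = n := by
  induction n using insertPerm.induct b with
  | case1 => rfl
  | case2 => rfl
  | case3 n h ih => simp [insertPerm, if_pos h, ih]
  | case4 n h ih => simp [insertPerm, if_neg h, ih]

lemma mem_insertPerm_le {b : ℕ → Bool} {n : ℕ} : ∀ {x : ℕ}, x ∈ insertPerm b n → x ≤ n := by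
  induction n using insertPerm.induct b with
  | case1 => intro x hx; simp [insertPerm] at hx
  | case2 => intro x hx; simp [insertPerm] at hx; omega
  | case3 n h ih =>
    intro x hx
    simp only [insertPerm, if_pos h, List.mem_cons] at hx
    rcases hx with h1 | h1
    · omega
    · exact le_trans (ih h1) (by omega)
  | case4 n h ih =>
    intro x hx
    simp only [insertPerm, if_neg h, List.mem_append, List.mem_singleton] at hx
    rcases hx with h1 | h1
    · exact le_trans (ih h1) (by omega)
    · omega

lemma insertPerm_congr {b b' : ℕ → Bool} {n : ℕ}
    (h : ∀ i, 2 ≤ i → i ≤ n → b i = b' i) : insertPerm b n = insertPerm b' n := by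
  induction n with
  | zero => rfl
  | succ n ih =>
    match n, ih with
    | 0, _ => rfl
    | Nat.succ m, ih =>
      have hb : b (m + 2) = b' (m + 2) := h _ (by omega) le_rfl
      have ih' : insertPerm b (m+1) = insertPerm b' (m+1) :=
        ih fun i h2 hi => h i h2 (by omega)
      show insertPerm b (m + 2) = insertPerm b' (m + 2)
      simp only [insertPerm, hb, ih']

lemma insertPerm_bits {b b' : ℕ → Bool} {n : ℕ}
    (h : insertPerm b n = insertPerm b' n) : ∀ i, 2 ≤ i → i ≤ n → b i = b' i := by
  induction n with
  | zero => intro i h2 hi; omega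
  | succ n ih =>
    match n, ih with
    | 0, _ => intro i h2 hi; omega
    | Nat.succ m, ih =>
      simp only [insertPerm] at h
      intro i h2 hi
      by_cases hb : b (m + 2) = true <;> by_cases hb' : b' (m + 2) = true
      · rw [if_pos hb, if_pos hb'] at h
        have htail : insertPerm b (m+1) = insertPerm b' (m+1) := by
          exact (List.cons.injEq _ _ _ _ ▸ h).2
        rcases Nat.lt_or_ge i (m + 2) with hlt | hge
        · exact ih htail i h2 (by omega)
        · have : i = m + 2 := by omega
          rw [this, hb, hb']
      · rw [if_pos hb, if_neg hb'] at h
        exfalso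
        have hlen : (insertPerm b' (m+1)).length = m + 1 := length_insertPerm _ _
        cases hL : insertPerm b' (m+1) with
        | nil => rw [hL] at hlen; simp at hlen
        | cons a l =>
          rw [hL] at h
          have ha : m + 2 = a := by
            have := List.head_eq_of_cons_eq (h.trans (List.cons_append : (a :: l) ++ [m+2] = a :: (l ++ [m+2])))
            exact this
          have : a ≤ m + 1 := mem_insertPerm_le (hL ▸ (List.mem_cons_self : a ∈ a :: l))
          omega
      · rw [if_neg hb, if_pos hb'] at h
        exfalso
        have hlen : (insertPerm b (m+1)).length = m + 1 := length_insertPerm _ _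
        cases hL : insertPerm b (m+1) with
        | nil => rw [hL] at hlen; simp at hlen
        | cons a l =>
          rw [hL] at h
          have ha : a = m + 2 := by
            have := List.head_eq_of_cons_eq ((List.cons_append : (a :: l) ++ [m+2] = a :: (l ++ [m+2])).symm.trans h)
            exact this
          have : a ≤ m + 1 := mem_insertPerm_le (hL ▸ (List.mem_cons_self : a ∈ a :: l))
          omega
      · rw [if_neg hb, if_neg hb'] at h
        have htail : insertPerm b (m+1) = insertPerm b' (m+1) :=
          List.append_cancel_right h
        rcases Nat.lt_or_ge i (m + 2) with hlt | hge
        · exact ih htail i h2 (by omega)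
        · have : i = m + 2 := by omega
          rw [this]
          simp only [Bool.not_eq_true] at hb hb'
          rw [hb, hb']

lemma rightJump_cons {L L' : List ℕ} (x : ℕ) (h : RightJump L L') :
    RightJump (x :: L) (x :: L') := by
  obtain ⟨hlen, i, j, hij, hj, hbig, hmid, hjv, hout⟩ := h
  refine ⟨by simp [hlen], i + 1, j + 1, by omega, by simp; omega, ?_, ?_, ?_, ?_⟩
  · intro t ht htj
    obtain ⟨s, rfl⟩ : ∃ s, t = s + 1 := ⟨t - 1, by omega⟩
    rw [List.getD_cons_succ, List.getD_cons_succ]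
    exact hbig s (by omega) (by omega)
  · intro r hr hrj
    obtain ⟨s, rfl⟩ : ∃ s, r = s + 1 := ⟨r - 1, by omega⟩
    rw [List.getD_cons_succ, List.getD_cons_succ]
    exact hmid s (by omega) (by omega)
  · rw [List.getD_cons_succ, List.getD_cons_succ]; exact hjv
  · intro r hr hor
    match r with
    | 0 => rw [List.getD_cons_zero, List.getD_cons_zero]
    | Nat.succ s =>
      rw [List.getD_cons_succ, List.getD_cons_succ]
      exact hout s (by simpa using hr) (by omega)

lemma rightJump_append {L L' : List ℕ} (x : ℕ) (h : RightJump L L') :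
    RightJump (L ++ [x]) (L' ++ [x]) := by
  obtain ⟨hlen, i, j, hij, hj, hbig, hmid, hjv, hout⟩ := h
  refine ⟨by simp [hlen], i, j, hij, by simp; omega, ?_, ?_, ?_, ?_⟩
  · intro t ht htj
    rw [List.getD_append _ _ _ _ (by omega), List.getD_append _ _ _ _ (by omega)]
    exact hbig t ht htj
  · intro r hr hrj
    rw [List.getD_append _ _ _ _ (by omega), List.getD_append _ _ _ _ (by omega)]
    exact hmid r hr hrj
  · rw [List.getD_append _ _ _ _ (by omega), List.getD_append _ _ _ _ (by omega)]
    exact hjv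
  · intro r hr hor
    simp only [List.length_append, List.length_singleton] at hr
    rcases Nat.lt_or_ge r L.length with hrl | hrl
    · rw [List.getD_append _ _ _ _ (by omega), List.getD_append _ _ _ _ hrl]
      exact hout r hrl hor
    · have hr' : r = L.length := by omega
      rw [List.getD_append_right _ _ _ _ (by omega), List.getD_append_right _ _ _ _ (by omega)]
      rw [hlen, hr']

lemma rightJump_cons_inv {L L' : List ℕ} {x : ℕ} (h : RightJump (x :: L) (x :: L'))
    (hx : x ∉ L') : RightJump L L' := by
  obtain ⟨hlen, i, j, hij, hj, hbig, hmid, hjv, hout⟩ := h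
  simp only [List.length_cons, Nat.succ.injEq] at hlen
  simp only [List.length_cons] at hj
  have hi : 1 ≤ i := by
    by_contra hi0
    have hi0 : i = 0 := by omega
    rw [hi0, List.getD_cons_zero] at hjv
    obtain ⟨s, rfl⟩ : ∃ s, j = s + 1 := ⟨j - 1, by omega⟩
    rw [List.getD_cons_succ] at hjv
    have hs : s < L'.length := by omega
    rw [List.getD_eq_getElem _ _ hs] at hjv
    exact hx (hjv ▸ List.getElem_mem hs)
  obtain ⟨i', rfl⟩ : ∃ i', i = i' + 1 := ⟨i - 1, by omega⟩
  obtain ⟨j', rfl⟩ : ∃ j', j = j' + 1 := ⟨j - 1, by omega⟩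
  refine ⟨hlen, i', j', by omega, by omega, ?_, ?_, ?_, ?_⟩
  · intro t ht htj
    have := hbig (t + 1) (by omega) (by omega)
    rwa [List.getD_cons_succ, List.getD_cons_succ] at this
  · intro r hr hrj
    have := hmid (r + 1) (by omega) (by omega)
    rwa [List.getD_cons_succ, List.getD_cons_succ] at this
  · have := hjv
    rwa [List.getD_cons_succ, List.getD_cons_succ] at this
  · intro r hr hor
    have := hout (r + 1) (by simp only [List.length_cons]; omega) (by omega)
    rwa [List.getD_cons_succ, List.getD_cons_succ] at this

lemma rightJump_append_inv {L L' : List ℕ} {x : ℕ} (h : RightJump (L ++ [x]) (L' ++ [x]))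
    (hx : x ∉ L) : RightJump L L' := by
  obtain ⟨hlen, i, j, hij, hj, hbig, hmid, hjv, hout⟩ := h
  simp only [List.length_append, List.length_singleton] at hlen hj
  have hlen' : L'.length = L.length := by omega
  have hjL : j < L.length := by
    by_contra hjge
    have hj' : j = L.length := by omega
    rw [hj', List.getD_append_right _ _ _ _ (by omega)] at hjv
    rw [List.getD_append _ _ _ _ (by omega)] at hjv
    simp only [hlen', Nat.sub_self, List.getD_cons_zero] at hjv
    have hi' : i < L.length := by omega
    rw [List.getD_eq_getElem _ _ hi'] at hjv
    exact hx (hjv ▸ List.getElem_mem hi')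
  refine ⟨hlen', i, j, hij, hjL, ?_, ?_, ?_, ?_⟩
  · intro t ht htj
    have := hbig t ht htj
    rwa [List.getD_append _ _ _ _ (by omega), List.getD_append _ _ _ _ (by omega)] at this
  · intro r hr hrj
    have := hmid r hr hrj
    rwa [List.getD_append _ _ _ _ (by omega), List.getD_append _ _ _ _ (by omega)] at this
  · have := hjv
    rwa [List.getD_append _ _ _ _ (by omega), List.getD_append _ _ _ _ (by omega)] at this
  · intro r hr hor
    have := hout r (by simp only [List.length_append, List.length_singleton]; omega) hor
    rwa [List.getD_append _ _ _ _ (by omega), List.getD_append _ _ _ _ (by omega)] at this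

lemma rightJump_rotate {M : List ℕ} {x : ℕ} (hne : M ≠ []) (hlt : ∀ y ∈ M, y < x) :
    RightJump (x :: M) (M ++ [x]) := by
  have hM : 0 < M.length := List.length_pos_iff.mpr hne
  refine ⟨by simp, 0, M.length, hM, by simp, ?_, ?_, ?_, ?_⟩
  · intro t ht htj
    obtain ⟨s, rfl⟩ : ∃ s, t = s + 1 := ⟨t - 1, by omega⟩
    rw [List.getD_cons_succ, List.getD_cons_zero]
    have hs : s < M.length := by omega
    rw [List.getD_eq_getElem _ _ hs]
    exact hlt _ (List.getElem_mem hs)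
  · intro r hr hrj
    rw [List.getD_append _ _ _ _ hrj, List.getD_cons_succ]
  · rw [List.getD_append_right _ _ _ _ le_rfl, Nat.sub_self, List.getD_cons_zero,
      List.getD_cons_zero]
  · intro r hr hor
    simp only [List.length_cons] at hr
    omega
lemma rightJump_insertPerm {b b' : ℕ → Bool} {k n : ℕ} (h2 : 2 ≤ k) (hkn : k ≤ n)
    (hbk : b k = true) (hb'k : b' k = false) :
    (∀ i, 2 ≤ i → i ≤ n → i ≠ k → b i = b' i) →
    RightJump (insertPerm b n) (insertPerm b' n) := by
  induction n, hkn using Nat.le_induction with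
  | base =>
    intro hagree
    obtain ⟨m, rfl⟩ : ∃ m, k = m + 2 := ⟨k - 2, by omega⟩
    have hM : insertPerm b (m+1) = insertPerm b' (m+1) :=
      insertPerm_congr (fun i hi2 hil => hagree i hi2 (by omega) (by omega))
    have hu : insertPerm b (m+2) = (m+2) :: insertPerm b (m+1) := by
      simp only [insertPerm, if_pos hbk]
    have hu' : insertPerm b' (m+2) = insertPerm b' (m+1) ++ [m+2] := by
      simp only [insertPerm, hb'k]; rfl
    rw [hu, hu', ← hM]
    apply rightJump_rotate
    · have : (insertPerm b (m+1)).length = m + 1 := length_insertPerm _ _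
      intro hnil; rw [hnil] at this; simp at this
    · intro y hy
      have := mem_insertPerm_le hy
      omega
  | succ n hn ih =>
    intro hagree
    have hb : b (n+1) = b' (n+1) := hagree (n+1) (by omega) le_rfl (by omega)
    have ih' := ih (fun i hi2 hin hik => hagree i hi2 (by omega) hik)
    rw [insertPerm_succ b n (by omega), insertPerm_succ b' n (by omega), ← hb]
    by_cases hbn : b (n+1) = true
    · rw [if_pos hbn, if_pos hbn]; exact rightJump_cons _ ih'
    · rw [if_neg hbn, if_neg hbn]; exact rightJump_append _ ih'

lemma card_of_rightJump_insertPerm : ∀ n (b b' : ℕ → Bool),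
    RightJump (insertPerm b n) (insertPerm b' n) →
    ((Finset.Icc 2 n).filter fun i => b i ≠ b' i).card = 1 := by
  intro n
  induction n using Nat.strong_induction_on with
  | _ n ih =>
    match n with
    | 0 =>
      intro b b' h
      obtain ⟨_, i, j, hij, hj, _⟩ := h
      simp [insertPerm] at hj
    | 1 =>
      intro b b' h
      obtain ⟨_, i, j, hij, hj, _⟩ := h
      simp [insertPerm] at hj
      omega
    | (m+2) =>
      intro b b' h
      have hAlen : (insertPerm b (m+1)).length = m + 1 := length_insertPerm _ _
      have hA'len : (insertPerm b' (m+1)).length = m + 1 := length_insertPerm _ _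
      have hIcc : Finset.Icc 2 (m+2) = insert (m+2) (Finset.Icc 2 (m+1)) := by
        ext x; simp [Finset.mem_Icc]; omega
      by_cases hb : b (m+2) = true <;> by_cases hb' : b' (m+2) = true
      · -- both true
        have hu : insertPerm b (m+2) = (m+2) :: insertPerm b (m+1) := by
          simp only [insertPerm, if_pos hb]
        have hu' : insertPerm b' (m+2) = (m+2) :: insertPerm b' (m+1) := by
          simp only [insertPerm, if_pos hb']
        rw [hu, hu'] at h
        have hjump : RightJump (insertPerm b (m+1)) (insertPerm b' (m+1)) :=
          rightJump_cons_inv h (fun hm => by have := mem_insertPerm_le hm; omega)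
        have hcard := ih (m+1) (by omega) b b' hjump
        rw [hIcc, Finset.filter_insert, if_neg (by simp [hb, hb'])]
        exact hcard
      · -- b true, b' false
        have hu : insertPerm b (m+2) = (m+2) :: insertPerm b (m+1) := by
          simp only [insertPerm, if_pos hb]
        have hu' : insertPerm b' (m+2) = insertPerm b' (m+1) ++ [m+2] := by
          simp only [insertPerm, if_neg hb']
        rw [hu, hu'] at h
        obtain ⟨hlen, i, j, hij, hjlt, hbig, hmid, hjv, hout⟩ := h
        simp only [List.length_cons, hAlen] at hjlt
        have hgetA : ∀ t, t < m + 1 →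
            ((m+2) :: insertPerm b (m+1)).getD (t+1) 0 ≤ m + 1 := by
          intro t ht
          rw [List.getD_cons_succ, List.getD_eq_getElem _ _ (by omega)]
          exact mem_insertPerm_le (List.getElem_mem (by omega))
        have hgetTop : (insertPerm b' (m+1) ++ [m+2]).getD (m+1) 0 = m + 2 := by
          rw [List.getD_append_right _ _ _ _ (by omega), hA'len, Nat.sub_self,
            List.getD_cons_zero]
        have hjtop : j = m + 1 := by
          by_contra hne
          have hr := hout (m+1) (by simp [List.length_cons, hAlen]) (Or.inr (by omega))
          rw [hgetTop] at hr
          have := hgetA m (by omega)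
          omega
        have hi0 : i = 0 := by
          by_contra hne
          obtain ⟨i', rfl⟩ : ∃ i', i = i' + 1 := ⟨i - 1, by omega⟩
          rw [hjtop, hgetTop] at hjv
          have := hgetA i' (by omega)
          omega
        have hAA' : insertPerm b' (m+1) = insertPerm b (m+1) := by
          apply List.ext_getElem (by omega)
          intro r h1 h2
          have := hmid r (by omega) (by omega)
          rw [List.getD_append _ _ _ _ (by omega), List.getD_cons_succ,
            List.getD_eq_getElem _ _ h1, List.getD_eq_getElem _ _ h2] at this
          exact this
        have hbits := insertPerm_bits hAA'.symm
        rw [hIcc, Finset.filter_insert, if_pos (by simp [hb, hb'])]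
        have hempty : (Finset.Icc 2 (m+1)).filter (fun i => b i ≠ b' i) = ∅ := by
          apply Finset.filter_eq_empty_iff.mpr
          intro x hx
          have hx' := Finset.mem_Icc.mp hx
          simp only [ne_eq, not_not]
          exact hbits x hx'.1 hx'.2
        rw [hempty]
        simp
      · -- b false, b' true : impossible
        exfalso
        have hu : insertPerm b (m+2) = insertPerm b (m+1) ++ [m+2] := by
          simp only [insertPerm, if_neg hb]
        have hu' : insertPerm b' (m+2) = (m+2) :: insertPerm b' (m+1) := by
          simp only [insertPerm, if_pos hb']
        rw [hu, hu'] at h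
        obtain ⟨hlen, i, j, hij, hjlt, hbig, hmid, hjv, hout⟩ := h
        simp only [List.length_append, List.length_singleton, hAlen] at hjlt
        have hget0 : (insertPerm b (m+1) ++ [m+2]).getD 0 0 ≤ m + 1 := by
          rw [List.getD_append _ _ _ _ (by omega), List.getD_eq_getElem _ _ (by omega)]
          exact mem_insertPerm_le (List.getElem_mem (by omega))
        have hgetTop : (insertPerm b (m+1) ++ [m+2]).getD (m+1) 0 = m + 2 := by
          rw [List.getD_append_right _ _ _ _ (by omega), hAlen, Nat.sub_self,
            List.getD_cons_zero]
        have hi0 : i = 0 := by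
          by_contra hne
          have hr := hout 0 (by simp) (Or.inl (by omega))
          rw [List.getD_cons_zero] at hr
          omega
        have hjle : j ≤ m := by
          by_contra hne
          have hj' : j = m + 1 := by omega
          have := hbig (m+1) (by omega) (by omega)
          rw [hi0, hgetTop] at this
          omega
        have hr := hout (m+1) (by simp [List.length_append, List.length_singleton, hAlen])
          (Or.inr (by omega))
        rw [hgetTop, List.getD_cons_succ, List.getD_eq_getElem _ _ (by omega)] at hr
        have := mem_insertPerm_le (List.getElem_mem (show m < (insertPerm b' (m+1)).length by omega))
        omega
      · -- both false
        have hu : insertPerm b (m+2) = insertPerm b (m+1) ++ [m+2] := by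
          simp only [insertPerm, if_neg hb]
        have hu' : insertPerm b' (m+2) = insertPerm b' (m+1) ++ [m+2] := by
          simp only [insertPerm, if_neg hb']
        rw [hu, hu'] at h
        have hjump : RightJump (insertPerm b (m+1)) (insertPerm b' (m+1)) :=
          rightJump_append_inv h (fun hm => by have := mem_insertPerm_le hm; omega)
        have hcard := ih (m+1) (by omega) b b' hjump
        rw [hIcc, Finset.filter_insert, if_neg (by simp [hb, hb'])]
        exact hcard

/-- For binary strings `b, b'` with bits indexed from 2 to `n`, the
permutations `f(b)` and `f(b')` differ by a jump iff the Hamming distance between `b`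
and `b'` (over the index range `2, ..., n`) equals 1. -/
theorem insertPerm_jump_iff (n : ℕ) (b b' : ℕ → Bool) :
    DiffByJump (insertPerm b n) (insertPerm b' n) ↔
      ((Finset.Icc 2 n).filter fun i => b i ≠ b' i).card = 1 := by
  constructor
  · rintro (h | h)
    · exact card_of_rightJump_insertPerm n b b' h
    · have hc := card_of_rightJump_insertPerm n b' b h
      rw [← hc]
      congr 1
      apply Finset.filter_congr
      intro x _
      simp [ne_comm]
  · intro hcard
    obtain ⟨k, hk⟩ := Finset.card_eq_one.mp hcard
    have hkmem : k ∈ (Finset.Icc 2 n).filter fun i => b i ≠ b' i :=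
      hk ▸ Finset.mem_singleton_self k
    rw [Finset.mem_filter, Finset.mem_Icc] at hkmem
    obtain ⟨⟨hk2, hkn⟩, hkne⟩ := hkmem
    have hothers : ∀ i, 2 ≤ i → i ≤ n → i ≠ k → b i = b' i := by
      intro i hi2 hin hik
      by_contra hne
      have hmem : i ∈ (Finset.Icc 2 n).filter fun i => b i ≠ b' i :=
        Finset.mem_filter.mpr ⟨Finset.mem_Icc.mpr ⟨hi2, hin⟩, hne⟩
      rw [hk, Finset.mem_singleton] at hmem
      exact hik hmem
    rcases Bool.eq_false_or_eq_true (b k) with hbk | hbk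
    · have hb'k : b' k = false := by
        cases hb'k : b' k
        · rfl
        · exact absurd (hbk.trans hb'k.symm) hkne
      left
      exact rightJump_insertPerm hk2 hkn hbk hb'k hothers
    · have hb'k : b' k = true := by
        cases hb'k : b' k
        · exact absurd (hbk.trans hb'k.symm) hkne
        · rfl
      right
      exact rightJump_insertPerm hk2 hkn hb'k hbk
        (fun i hi2 hin hik => (hothers i hi2 hin hik).symm)
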